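/- arXiv:2509.23085 — 5 statements merged into one kernel-verified Lean document; each statement's English description precedes it below -/
import Mathlib

section
/- Let f be an odd-sigmoid function with ω := 1/f'(0), and for a > ω define φ_a(x) := f(a x). Then φ_a has exactly three fixed points: 0, ξ_a, and -ξ_a, for some ξ_a > 0. -/
open Set Filter Topology

def OddSigmoid (f : ℝ → ℝ) : Prop :=
  ContDiff ℝ 1 f ∧ (∀ x, f (-x) = -f x) ∧ (∃ M, ∀ x, |f x| ≤ M) ∧
    (∀ x, 0 < deriv f x) ∧ StrictAntiOn (deriv f) (Set.Ici 0)

theorem stmt_4 (f : ℝ → ℝ) (hf : OddSigmoid f) (a : ℝ) (haw : 1 / deriv f 0 < a) :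
    ∃ ξ : ℝ, 0 < ξ ∧ ∀ x : ℝ, f (a * x) = x ↔ x = 0 ∨ x = ξ ∨ x = -ξ := by
  obtain ⟨hC1, hodd, ⟨M, hM⟩, hpos, hanti⟩ := hf
  have hdf : Differentiable ℝ f := hC1.differentiable one_ne_zero
  have hdc : Continuous (deriv f) := hC1.continuous_deriv le_rfl
  have hf0 : f 0 = 0 := by have := hodd 0; simp at this; linarith
  have ha0 : 0 < a := lt_trans (div_pos one_pos (hpos 0)) haw
  have haf : 1 < a * deriv f 0 := by
    rw [div_lt_iff₀ (hpos 0)] at haw; linarith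
  set g : ℝ → ℝ := fun x => f (a * x) - x with hg
  have hgd : ∀ x, HasDerivAt g (a * deriv f (a * x) - 1) x := by
    intro x
    have h0 : HasDerivAt (fun y : ℝ => a * y) a x := by
      simpa using (hasDerivAt_id x).const_mul a
    have h1 : HasDerivAt (fun x : ℝ => f (a * x)) (deriv f (a * x) * a) x :=
      (hdf (a * x)).hasDerivAt.comp x h0
    have h2 : HasDerivAt g (deriv f (a * x) * a - 1) x := h1.sub (hasDerivAt_id' x)
    exact h2.congr_deriv (by ring)
  have hgderiv : ∀ x, deriv g x = a * deriv f (a * x) - 1 := fun x => (hgd x).deriv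
  have hgc : Continuous g := by
    have : Continuous fun x : ℝ => f (a * x) := hdf.continuous.comp (by continuity)
    exact this.sub continuous_id
  have hganti : StrictAntiOn (deriv g) (Set.Ici 0) := by
    intro x hx y hy hxy
    rw [hgderiv, hgderiv]
    have : deriv f (a * y) < deriv f (a * x) :=
      hanti (mul_nonneg ha0.le hx) (mul_nonneg ha0.le hy) ((mul_lt_mul_iff_right₀ ha0).2 hxy)
    nlinarith
  have hconc : StrictConcaveOn ℝ (Set.Ici 0) g := by
    apply StrictAntiOn.strictConcaveOn_of_deriv (convex_Ici 0) hgc.continuousOn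
    rw [interior_Ici]
    exact fun x hx y hy hxy => hganti (mem_Ici.2 (le_of_lt hx)) (mem_Ici.2 (le_of_lt hy)) hxy
  have hg0 : g 0 = 0 := by simp [hg, hf0]
  have hgd0 : 0 < deriv g 0 := by rw [hgderiv]; rw [mul_zero]; linarith
  have hcontg' : Continuous (deriv g) := by
    have h : (deriv g) = fun x => a * deriv f (a * x) - 1 := funext hgderiv
    rw [h]
    exact ((continuous_const.mul (hdc.comp (by continuity))).sub continuous_const)
  obtain ⟨δ, hδpos, hδ⟩ : ∃ δ > 0, ∀ x ∈ Metric.ball (0:ℝ) δ, 0 < deriv g x := by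
    have h := hcontg'.continuousAt (x := 0) (Ioi_mem_nhds hgd0)
    obtain ⟨δ, hδ, h2⟩ := Metric.eventually_nhds_iff_ball.1 h
    exact ⟨δ, hδ, fun x hx => h2 x hx⟩
  set ε := δ / 2 with hε
  have hεpos : 0 < ε := by positivity
  have hεball : ∀ x ∈ Icc (0:ℝ) ε, 0 < deriv g x := by
    intro x hx
    apply hδ
    simp only [Metric.mem_ball, Real.dist_eq, sub_zero]
    rw [abs_of_nonneg hx.1]
    have := hx.2
    have h2 : ε = δ / 2 := hε
    linarith [h2 ▸ this]
  have hmono : StrictMonoOn g (Icc 0 ε) :=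
    strictMonoOn_of_deriv_pos (convex_Icc 0 ε) hgc.continuousOn
      (fun x hx => hεball x (interior_subset hx))
  have hgε : 0 < g ε := by
    have := hmono (Set.left_mem_Icc.2 hεpos.le) (Set.right_mem_Icc.2 hεpos.le) hεpos
    rwa [hg0] at this
  set b := max (ε + 1) (M + 1) with hb
  have hεb : ε < b := lt_of_lt_of_le (by linarith) (le_max_left _ _)
  have hgb : g b < 0 := by
    have h1 : f (a * b) ≤ M := (abs_le.1 (hM (a * b))).2
    have h2 : M + 1 ≤ b := le_max_right _ _
    simp only [hg]
    linarith
  obtain ⟨ξ, hξmem, hξ⟩ : ∃ ξ ∈ Icc ε b, g ξ = 0 :=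
    intermediate_value_Icc' hεb.le hgc.continuousOn ⟨hgb.le, hgε.le⟩
  have hξpos : 0 < ξ := lt_of_lt_of_le hεpos hξmem.1
  -- strict concavity: middle point strictly above zero chord
  have hmid : ∀ q r : ℝ, 0 < q → q < r → g r = 0 → 0 < g q := by
    intro q r hq hqr hr
    have hrpos : 0 < r := hq.trans hqr
    have hs1 : 0 < q / r := div_pos hq hrpos
    have hs2 : 0 < 1 - q / r := by
      have : q / r < 1 := (div_lt_one hrpos).2 hqr
      linarith
    have key := hconc.2 (Set.mem_Ici.2 (le_refl (0:ℝ))) (Set.mem_Ici.2 hrpos.le)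
      (Ne.symm hrpos.ne') hs2 hs1 (by ring)
    have heq : (1 - q / r) • (0:ℝ) + (q / r) • r = q := by
      simp only [smul_eq_mul]
      field_simp
      ring
    rw [heq] at key
    simpa [hg0, hr] using key
  have huniq : ∀ x : ℝ, 0 < x → g x = 0 → x = ξ := by
    intro x hx hgx
    by_contra hne
    rcases lt_or_gt_of_ne hne with h | h
    · have := hmid x ξ hx h hξ
      rw [hgx] at this; exact lt_irrefl 0 this
    · have := hmid ξ x hξpos h hgx
      rw [hξ] at this; exact lt_irrefl 0 this
  refine ⟨ξ, hξpos, fun x => ⟨fun hfx => ?_, fun hx => ?_⟩⟩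
  · have hgx : g x = 0 := by simp [hg, hfx]
    rcases lt_trichotomy x 0 with h | h | h
    · right; right
      have hgnx : g (-x) = 0 := by
        have : f (a * (-x)) = f (-(a * x)) := by ring_nf
        simp only [hg] at hgx ⊢
        rw [this, hodd]
        linarith
      have := huniq (-x) (by linarith) hgnx
      linarith
    · left; exact h
    · right; left; exact huniq x h hgx
  · rcases hx with h | h | h
    · rw [h, mul_zero, hf0]
    · rw [h]
      have : g ξ = 0 := hξ
      simp only [hg] at this
      linarith
    · rw [h]
      have hgξ : f (a * ξ) = ξ := by
        have : g ξ = 0 := hξ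
        simp only [hg] at this; linarith
      have : a * -ξ = -(a * ξ) := by ring
      rw [this, hodd, hgξ]
end

section
/- Let f be an odd-sigmoid function with ω := 1/f'(0). Fix 0 < a ≤ ω and x₀ > 0, and define x_{n+1} = f(a x_n). Then x_n → 0 as n → ∞. -/
open Set Filter Topology

lemma oddsig_zero (f : ℝ → ℝ) (hf : OddSigmoid f) : f 0 = 0 := by
  have := hf.2.1 0
  simp at this
  linarith

lemma oddsig_key (f : ℝ → ℝ) (hf : OddSigmoid f) (t : ℝ) (ht : 0 < t) :
    f t < deriv f 0 * t := by
  have hdiff : Differentiable ℝ f := hf.1.differentiable one_ne_zero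
  obtain ⟨c, hc, hslope⟩ := exists_deriv_eq_slope f ht
    (hdiff.continuous.continuousOn) (hdiff.differentiableOn)
  have h0 : f 0 = 0 := oddsig_zero f hf
  have hft : f t = deriv f c * t := by
    rw [h0, sub_zero, sub_zero] at hslope
    field_simp at hslope
    linarith
  have hlt : deriv f c < deriv f 0 :=
    hf.2.2.2.2 (le_refl (0:ℝ)) (le_of_lt hc.1) hc.1
  rw [hft]
  exact mul_lt_mul_of_pos_right hlt ht

theorem stmt_5 (f : ℝ → ℝ) (hf : OddSigmoid f) (a : ℝ) (ha : 0 < a)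
    (haw : a ≤ 1 / deriv f 0) (x : ℕ → ℝ) (hx0 : 0 < x 0)
    (hrec : ∀ n, x (n + 1) = f (a * x n)) :
    Filter.Tendsto x Filter.atTop (nhds 0) := by
  have hdiff : Differentiable ℝ f := hf.1.differentiable one_ne_zero
  have hd0 : 0 < deriv f 0 := hf.2.2.2.1 0
  have had : a * deriv f 0 ≤ 1 := (le_div_iff₀ hd0).mp haw
  have hmono : StrictMono f := strictMono_of_deriv_pos hf.2.2.2.1
  have h0 : f 0 = 0 := oddsig_zero f hf
  -- positivity
  have hpos : ∀ n, 0 < x n := by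
    intro n
    induction n with
    | zero => exact hx0
    | succ n ih =>
      rw [hrec n]
      have := hmono (mul_pos ha ih)
      rwa [h0] at this
  -- decreasing
  have hstep : ∀ n, x (n + 1) < x n := by
    intro n
    rw [hrec n]
    calc f (a * x n) < deriv f 0 * (a * x n) :=
          oddsig_key f hf _ (mul_pos ha (hpos n))
      _ = (a * deriv f 0) * x n := by ring
      _ ≤ 1 * x n := mul_le_mul_of_nonneg_right had (hpos n).le
      _ = x n := one_mul _
  have hanti : Antitone x := antitone_nat_of_succ_le fun n => (hstep n).le
  have hbdd : BddBelow (Set.range x) := ⟨0, fun y ⟨n, hn⟩ => hn ▸ (hpos n).le⟩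
  set L := ⨅ n, x n with hL
  have hlim : Tendsto x atTop (nhds L) := tendsto_atTop_ciInf hanti hbdd
  have hL0 : 0 ≤ L := le_ciInf fun n => (hpos n).le
  have hfix : f (a * L) = L := by
    have h1 : Tendsto (fun n => x (n + 1)) atTop (nhds L) :=
      hlim.comp (tendsto_add_atTop_nat 1)
    have h2 : Tendsto (fun n => f (a * x n)) atTop (nhds (f (a * L))) :=
      (hdiff.continuous.tendsto _).comp (hlim.const_mul a)
    have : (fun n => x (n + 1)) = fun n => f (a * x n) := funext hrec
    rw [this] at h1
    exact tendsto_nhds_unique h2 h1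
  rcases hL0.lt_or_eq with hLpos | hLzero
  · exfalso
    have hkey : f (a * L) < deriv f 0 * (a * L) :=
      oddsig_key f hf _ (mul_pos ha hLpos)
    have : deriv f 0 * (a * L) ≤ L := by
      calc deriv f 0 * (a * L) = (a * deriv f 0) * L := by ring
        _ ≤ 1 * L := mul_le_mul_of_nonneg_right had hLpos.le
        _ = L := one_mul _
    linarith [hfix ▸ hkey]
  · rw [← hLzero] at hlim; exact hlim
end

section
/- Let f be an odd-sigmoid function with ω := 1/f'(0). Fix a > ω and x₀ > 0, and define x_{n+1} = f(a x_n). Then x_n converges to ξ_a, the unique positive solution of f(a ξ) = ξ. -/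
open Set Filter Topology

theorem stmt_6 (f : ℝ → ℝ) (hf : OddSigmoid f) (a : ℝ) (haw : 1 / deriv f 0 < a)
    (ξ : ℝ) (hξpos : 0 < ξ) (hξfix : f (a * ξ) = ξ)
    (hξuniq : ∀ y : ℝ, 0 < y → f (a * y) = y → y = ξ)
    (x : ℕ → ℝ) (hx0 : 0 < x 0) (hrec : ∀ n, x (n + 1) = f (a * x n)) :
    Filter.Tendsto x Filter.atTop (nhds ξ) := by
  obtain ⟨hC1, hodd, hbdd, hderiv, hanti⟩ := hf
  have hdiff : Differentiable ℝ f := hC1.differentiable one_ne_zero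
  have hcont : Continuous f := hdiff.continuous
  have hmono : StrictMono f := strictMono_of_deriv_pos hderiv
  have hf0 : f 0 = 0 := by have := hodd 0; simp at this; linarith
  have h0 : 0 < deriv f 0 := hderiv 0
  have ha : 0 < a := lt_trans (div_pos one_pos h0) haw
  have hconc : StrictConcaveOn ℝ (Ici 0) f :=
    StrictAntiOn.strictConcaveOn_of_deriv (convex_Ici 0) hcont.continuousOn
      (by rw [interior_Ici]; exact hanti.mono (Ioi_subset_Ici le_rfl))
  have key1 : ∀ y, 0 < y → y < ξ → y < f (a * y) := by
    intro y hy hyξ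
    have ht : (0:ℝ) < y / ξ := by positivity
    have ht1 : 0 < 1 - y / ξ := by
      rw [sub_pos, div_lt_one hξpos]; exact hyξ
    have h := hconc.2 (self_mem_Ici) (mem_Ici.mpr (by positivity : (0:ℝ) ≤ a * ξ))
      (ne_of_lt (mul_pos ha hξpos)) ht1 ht (by ring)
    have harg : (1 - y / ξ) • (0:ℝ) + (y / ξ) • (a * ξ) = a * y := by
      rw [smul_eq_mul, smul_eq_mul, mul_zero, zero_add, div_mul_eq_mul_div, div_eq_iff hξpos.ne']; ring
    rw [harg, hf0, hξfix] at h
    have hy' : y / ξ * ξ = y := div_mul_cancel₀ y hξpos.ne'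
    simpa [smul_eq_mul, hy'] using h
  have key2 : ∀ y, ξ < y → f (a * y) < y := by
    intro y hyξ
    have hy : 0 < y := hξpos.trans hyξ
    have ht : (0:ℝ) < ξ / y := by positivity
    have ht1 : 0 < 1 - ξ / y := by
      rw [sub_pos, div_lt_one hy]; exact hyξ
    have h := hconc.2 (self_mem_Ici) (mem_Ici.mpr (by positivity : (0:ℝ) ≤ a * y))
      (ne_of_lt (mul_pos ha hy)) ht1 ht (by ring)
    have harg : (1 - ξ / y) • (0:ℝ) + (ξ / y) • (a * y) = a * ξ := by
      rw [smul_eq_mul, smul_eq_mul, mul_zero, zero_add, div_mul_eq_mul_div, div_eq_iff hy.ne']; ring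
    rw [harg, hf0, hξfix] at h
    have h2 : (ξ / y) * f (a * y) < ξ := by
      simpa [smul_eq_mul] using h
    rw [div_mul_eq_mul_div, div_lt_iff₀ hy] at h2
    exact lt_of_mul_lt_mul_left h2 hξpos.le
  rcases lt_trichotomy (x 0) ξ with hlt | heq | hgt
  · -- increasing case
    have hinv : ∀ n, 0 < x n ∧ x n < ξ ∧ x n ≤ x (n + 1) := by
      intro n
      induction n with
      | zero =>
        refine ⟨hx0, hlt, ?_⟩
        rw [hrec 0]; exact (key1 _ hx0 hlt).le
      | succ n ih =>
        obtain ⟨h1, h2, _⟩ := ih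
        have hp : 0 < x (n+1) := by
          rw [hrec n]
          calc (0:ℝ) = f 0 := hf0.symm
          _ < f (a * x n) := hmono (by positivity)
        have hl : x (n+1) < ξ := by
          rw [hrec n, ← hξfix]
          exact hmono (by nlinarith)
        exact ⟨hp, hl, by rw [hrec (n+1)]; exact (key1 _ hp hl).le⟩
    have hm : Monotone x := monotone_nat_of_le_succ fun n => (hinv n).2.2
    have hb : BddAbove (Set.range x) := ⟨ξ, by rintro _ ⟨n, rfl⟩; exact (hinv n).2.1.le⟩
    have hL : Tendsto x atTop (𝓝 (⨆ n, x n)) := tendsto_atTop_ciSup hm hb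
    set L := ⨆ n, x n with hLdef
    have hL2 : Tendsto (fun n => x (n + 1)) atTop (𝓝 L) :=
      hL.comp (tendsto_add_atTop_nat 1)
    have hL3 : Tendsto (fun n => f (a * x n)) atTop (𝓝 (f (a * L))) :=
      (hcont.tendsto _).comp (tendsto_const_nhds.mul hL)
    have hfix : f (a * L) = L := by
      refine tendsto_nhds_unique ?_ hL2
      simpa only [← hrec] using hL3
    have hLpos : 0 < L := lt_of_lt_of_le hx0 (le_ciSup hb 0)
    have : L = ξ := hξuniq L hLpos hfix
    rwa [this] at hL
  · -- constant case
    have : ∀ n, x n = ξ := by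
      intro n; induction n with
      | zero => exact heq
      | succ n ih => rw [hrec n, ih, hξfix]
    have hx : x = fun _ => ξ := funext this
    rw [hx]; exact tendsto_const_nhds
  · -- decreasing case
    have hinv : ∀ n, ξ < x n ∧ x (n + 1) ≤ x n := by
      intro n
      induction n with
      | zero => exact ⟨hgt, by rw [hrec 0]; exact (key2 _ hgt).le⟩
      | succ n ih =>
        obtain ⟨h1, _⟩ := ih
        have hg : ξ < x (n+1) := by
          rw [hrec n, ← hξfix]
          exact hmono (by nlinarith)
        exact ⟨hg, by rw [hrec (n+1)]; exact (key2 _ hg).le⟩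
    have hm : Antitone x := antitone_nat_of_succ_le fun n => (hinv n).2
    have hb : BddBelow (Set.range x) := ⟨ξ, by rintro _ ⟨n, rfl⟩; exact (hinv n).1.le⟩
    have hL : Tendsto x atTop (𝓝 (⨅ n, x n)) := tendsto_atTop_ciInf hm hb
    set L := ⨅ n, x n with hLdef
    have hL2 : Tendsto (fun n => x (n + 1)) atTop (𝓝 L) :=
      hL.comp (tendsto_add_atTop_nat 1)
    have hL3 : Tendsto (fun n => f (a * x n)) atTop (𝓝 (f (a * L))) :=
      (hcont.tendsto _).comp (tendsto_const_nhds.mul hL)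
    have hfix : f (a * L) = L := by
      refine tendsto_nhds_unique ?_ hL2
      simpa only [← hrec] using hL3
    have hLpos : 0 < L := lt_of_lt_of_le hξpos (le_ciInf fun n => (hinv n).1.le)
    have : L = ξ := hξuniq L hLpos hfix
    rwa [this] at hL
end

section
/- Let f be an odd-sigmoid function with ω := 1/f'(0), let ε > 0, and let {a_n} be a positive sequence such that only finitely many a_n are less than ω + ε. Define Φ_m := φ_{a_m} ∘ ⋯ ∘ φ_{a_1} where φ_a(x) := f(a x). Then for every x ≠ 0, liminf_{m→∞} |Φ_m(x)| ≥ ξ_{ω+ε}, where ξ_{ω+ε} > 0 is the unique positive fixed point of φ_{ω+ε}. -/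
open Set Filter Topology

theorem stmt_10 (f : ℝ → ℝ) (hf : OddSigmoid f) (ε : ℝ) (hε : 0 < ε)
    (a : ℕ → ℝ) (ha : ∀ n, 0 < a n)
    (hfin : {n : ℕ | a n < 1 / deriv f 0 + ε}.Finite)
    (Φ : ℕ → ℝ → ℝ) (hΦ0 : ∀ x, Φ 0 x = x)
    (hΦ : ∀ m x, Φ (m + 1) x = f (a (m + 1) * Φ m x))
    (ξ : ℝ) (hξpos : 0 < ξ) (hξfix : f ((1 / deriv f 0 + ε) * ξ) = ξ)
    (hξuniq : ∀ y : ℝ, 0 < y → f ((1 / deriv f 0 + ε) * y) = y → y = ξ) :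
    ∀ x : ℝ, x ≠ 0 → ξ ≤ Filter.atTop.liminf (fun m => |Φ m x|) := by
  obtain ⟨hC1, hodd, ⟨M, hM⟩, hd, hanti⟩ := hf
  set b : ℝ := 1 / deriv f 0 + ε with hbdef
  have hdiff : Differentiable ℝ f := hC1.differentiable one_ne_zero
  have hcont : Continuous f := hdiff.continuous
  have hmono : StrictMono f := strictMono_of_deriv_pos hd
  have hf0 : f 0 = 0 := by have h := hodd 0; simp at h; linarith
  have hd0 : 0 < deriv f 0 := hd 0
  have hbpos : 0 < b := by positivity
  -- strict concavity on [0, ∞)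
  have hconc : StrictConcaveOn ℝ (Ici (0:ℝ)) f := by
    apply StrictAntiOn.strictConcaveOn_of_deriv (convex_Ici 0) hcont.continuousOn
    rw [interior_Ici]
    exact fun u hu v hv huv => hanti (mem_Ici.mpr (le_of_lt hu)) (mem_Ici.mpr (le_of_lt hv)) huv
  -- key inequality: t < f (b t) for 0 < t < ξ
  have hkey : ∀ t : ℝ, 0 < t → t < ξ → t < f (b * t) := by
    intro t ht htξ
    have hξne : ξ ≠ 0 := ne_of_gt hξpos
    have hl0 : 0 < t / ξ := div_pos ht hξpos
    have hl1 : t / ξ < 1 := (div_lt_one hξpos).mpr htξ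
    have hbξ : (0:ℝ) < b * ξ := mul_pos hbpos hξpos
    have h := hconc.2 (Set.self_mem_Ici) (Set.mem_Ici.mpr hbξ.le) (ne_of_lt hbξ)
      (by linarith : (0:ℝ) < 1 - t / ξ) hl0 (by ring)
    have heq : (1 - t / ξ) • (0:ℝ) + (t / ξ) • (b * ξ) = b * t := by
      simp only [smul_eq_mul, mul_zero, zero_add]; rw [div_mul_eq_mul_div, div_eq_iff hξne]; ring
    rw [heq, hf0, hξfix] at h
    have : (t / ξ) * ξ = t := div_mul_cancel₀ t hξne
    calc t = (1 - t / ξ) * 0 + (t / ξ) * ξ := by rw [this]; ring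
      _ < f (b * t) := h
  have hfix : f (b * ξ) = ξ := hξfix
  -- eventually a n ≥ b
  obtain ⟨N₀, hN₀⟩ := hfin.bddAbove
  set N := N₀ + 1 with hNdef
  have haN : ∀ n, N ≤ n → b ≤ a n := by
    intro n hn
    by_contra h
    have : n ∈ {n : ℕ | a n < b} := not_le.mp h
    have := hN₀ this
    omega
  intro x hx
  set y : ℕ → ℝ := fun m => |Φ m x| with hydef
  have hne : ∀ m, Φ m x ≠ 0 := by
    intro m
    induction m with
    | zero => rw [hΦ0]; exact hx
    | succ m ih =>
      rw [hΦ]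
      intro h
      have : a (m+1) * Φ m x = 0 := hmono.injective (by rw [h, hf0])
      exact ih (by
        rcases mul_eq_zero.mp this with h' | h'
        · exact absurd h' (ne_of_gt (ha (m+1)))
        · exact absurd h' (fun hh => (ih hh).elim)) |>.elim
  have hpos : ∀ m, 0 < y m := fun m => abs_pos.mpr (hne m)
  have hstep : ∀ m, y (m+1) = f (a (m+1) * y m) := by
    intro m
    simp only [hydef, hΦ]
    rcases (hne m).lt_or_gt with h | h
    · have h1 : a (m+1) * Φ m x < 0 := mul_neg_of_pos_of_neg (ha (m+1)) h
      have h2 : f (a (m+1) * Φ m x) < 0 := hf0 ▸ hmono h1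
      rw [abs_of_neg h2, abs_of_neg h]
      rw [show a (m+1) * -Φ m x = -(a (m+1) * Φ m x) by ring, hodd]
    · have h1 : 0 < a (m+1) * Φ m x := mul_pos (ha (m+1)) h
      have h2 : 0 < f (a (m+1) * Φ m x) := hf0 ▸ hmono h1
      rw [abs_of_pos h2, abs_of_pos h]
  have hstep' : ∀ m, N ≤ m → f (b * y m) ≤ y (m+1) := by
    intro m hm
    rw [hstep m]
    exact hmono.monotone (mul_le_mul_of_nonneg_right (haN (m+1) (by omega)) (hpos m).le)
  have hbd : ∀ᶠ m in atTop, y m ≤ M := by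
    filter_upwards [eventually_ge_atTop 1] with m hm
    obtain ⟨k, rfl⟩ := Nat.exists_eq_add_of_le hm
    rw [show 1 + k = k + 1 by ring, hydef]
    simp only [hΦ]
    exact hM _
  by_cases hA : ∃ m, N ≤ m ∧ ξ ≤ y m
  · -- once above ξ, stays above ξ
    obtain ⟨m₀, hm₀, hym₀⟩ := hA
    have hall : ∀ k, ξ ≤ y (m₀ + k) := by
      intro k
      induction k with
      | zero => simpa using hym₀
      | succ k ih =>
        calc ξ = f (b * ξ) := hfix.symm
          _ ≤ f (b * y (m₀ + k)) :=
            hmono.monotone (mul_le_mul_of_nonneg_left ih hbpos.le)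
          _ ≤ y (m₀ + k + 1) := hstep' (m₀ + k) (by omega)
    refine le_liminf_of_le (isCoboundedUnder_ge_of_eventually_le atTop hbd) ?_
    rw [eventually_atTop]
    exact ⟨m₀, fun m hm => by
      have h := hall (m - m₀)
      rwa [Nat.add_sub_cancel' hm] at h⟩
  · push_neg at hA
    have hB : ∀ m, N ≤ m → y m < ξ := fun m hm => hA m hm
    set z : ℕ → ℝ := fun k => y (k + N) with hzdef
    have hzmono : Monotone z := by
      apply monotone_nat_of_le_succ
      intro k
      have h1 : y (k + N) < f (b * y (k + N)) :=
        hkey _ (hpos _) (hB _ (by omega))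
      have h2 : f (b * y (k + N)) ≤ y (k + N + 1) := hstep' _ (by omega)
      simpa [hzdef, show k + 1 + N = k + N + 1 by omega] using h1.le.trans h2
    have hzbdd : BddAbove (Set.range z) := by
      refine ⟨ξ, fun w hw => ?_⟩
      obtain ⟨k, rfl⟩ := hw
      exact (hB _ (by omega)).le
    have hztend : Tendsto z atTop (𝓝 (⨆ k, z k)) := tendsto_atTop_ciSup hzmono hzbdd
    set L : ℝ := ⨆ k, z k with hLdef
    have hLξ : L ≤ ξ := ciSup_le fun k => (hB _ (by omega)).le
    have hL0 : 0 < L := lt_of_lt_of_le (hpos N) (by simpa [hzdef] using le_ciSup hzbdd 0)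
    have hgL : f (b * L) ≤ L := by
      have h1 : Tendsto (fun k => z (k + 1)) atTop (𝓝 L) :=
        hztend.comp (tendsto_add_atTop_nat 1)
      have h2 : Tendsto (fun k => f (b * z k)) atTop (𝓝 (f (b * L))) :=
        (hcont.tendsto _).comp (hztend.const_mul b)
      refine le_of_tendsto_of_tendsto h2 h1 (Eventually.of_forall fun k => ?_)
      have := hstep' (k + N) (by omega)
      simpa [hzdef, show k + 1 + N = k + N + 1 by omega] using this
    have hLeq : L = ξ := by
      by_contra h
      exact absurd hgL (not_le.mpr (hkey L hL0 (lt_of_le_of_ne hLξ h)))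
    have hytend : Tendsto y atTop (𝓝 ξ) := by
      rw [← tendsto_add_atTop_iff_nat N]
      exact hLeq ▸ hztend
    exact (hytend.liminf_eq).ge
end

section
/- Let f be an odd-sigmoid function, x₀ > 0, and let a₁,…,a_m be positive reals with a_min := min{a₁,…,a_m}. With φ_a(x) := f(a x), one has φ_{a_1} ∘ ⋯ ∘ φ_{a_m}(x₀) ≥ φ_{a_min}^{∘m}(x₀), the m-fold composition of φ_{a_min}. -/
open Set Filter Topology

lemma aux_key (f : ℝ → ℝ) (hmono : StrictMono f) (hf0 : f 0 = 0)
    (amin : ℝ) (ha : 0 < amin) (x₀ : ℝ) (hx₀ : 0 < x₀) :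
    ∀ l : List ℝ, (∀ c ∈ l, amin ≤ c) →
      0 < l.foldr (fun c y => f (c * y)) x₀ ∧
      (fun x => f (amin * x))^[l.length] x₀ ≤ l.foldr (fun c y => f (c * y)) x₀ := by
  intro l
  induction l with
  | nil => intro _; exact ⟨hx₀, le_refl _⟩
  | cons c l ih =>
    intro h
    obtain ⟨hpos, hle⟩ := ih (fun d hd => h d (List.mem_cons_of_mem _ hd))
    have hc : amin ≤ c := h c List.mem_cons_self
    have hfold : (c :: l).foldr (fun c y => f (c * y)) x₀
        = f (c * l.foldr (fun c y => f (c * y)) x₀) := rfl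
    constructor
    · rw [hfold, ← hf0]
      exact hmono (mul_pos (ha.trans_le hc) hpos)
    · rw [List.length_cons, Function.iterate_succ_apply', hfold]
      calc f (amin * (fun x => f (amin * x))^[l.length] x₀)
          ≤ f (amin * l.foldr (fun c y => f (c * y)) x₀) := by
            apply hmono.monotone
            exact mul_le_mul_of_nonneg_left hle ha.le
        _ ≤ f (c * l.foldr (fun c y => f (c * y)) x₀) := by
            apply hmono.monotone
            exact mul_le_mul_of_nonneg_right hc hpos.le

theorem stmt_11 (f : ℝ → ℝ) (hf : OddSigmoid f) (x₀ : ℝ) (hx₀ : 0 < x₀)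
    (l : List ℝ) (hl : ∀ c ∈ l, 0 < c) (amin : ℝ) (hmem : amin ∈ l)
    (hmin : ∀ c ∈ l, amin ≤ c) :
    (fun x => f (amin * x))^[l.length] x₀ ≤ l.foldr (fun c y => f (c * y)) x₀ := by
  obtain ⟨hc1, hodd, _, hderiv, _⟩ := hf
  have hmono : StrictMono f :=
    strictMono_of_deriv_pos hderiv
  have hf0 : f 0 = 0 := by
    have := hodd 0
    simp at this
    linarith
  exact (aux_key f hmono hf0 amin (hl amin hmem) x₀ hx₀ l hmin).2
end
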